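/- If a path from root to leaf in the cluster-forest encounters queue nodes whose associated labels strictly decrease with gap ≥ g₁ = ⌈ε_q log log n⌉ (types 1–3) and type-4 nodes separated by rank drops of at least g₂ = c·log log n, and all labels lie in [0, c'·log n], then the total number of queue nodes on the path is O((1/ε_q + 1/ε_h)·log n/log log n). -/

import Mathlib

open Filter Real

lemma gap_count_aux (a : ℕ → ℕ) (g k : ℕ) (h : ∀ j < k, a (j + 1) + g ≤ a j) :
    ∀ j ≤ k, a j + j * g ≤ a 0 := by
  intro j hj
  induction j with
  | zero => simp
  | succ i ih =>
    have h1 := h i (lt_of_lt_of_le (Nat.lt_succ_self i) hj)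
    have h2 := ih (le_trans (Nat.le_succ i) hj)
    have : (i + 1) * g = i * g + g := by ring
    omega

/-- Combining the gap-counting lemma for the type-1–3 queue nodes (label gaps at least
⌈ε_q·log log n⌉) and the type-4 queue nodes (rank drops at least ⌈c·log log n⌉), with all
labels in [0, c'·log n], the total number of queue nodes on a downward shortcut path is
O((1/ε_q + 1/ε_h)·log n/log log n). -/
theorem stmt_17 (εq εh c c' : ℝ) (hq : 0 < εq) (hh : 0 < εh) (hc : 0 < c) (hc' : 0 < c') :
    ∃ K > (0 : ℝ), ∀ᶠ n : ℕ in atTop, ∀ (k₁ k₂ : ℕ) (a b : ℕ → ℕ),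
      (∀ j ≤ k₁, (a j : ℝ) ≤ c' * Real.logb 2 n) →
      (∀ j < k₁, a (j + 1) + ⌈εq * Real.logb 2 (Real.logb 2 n)⌉₊ ≤ a j) →
      (∀ j ≤ k₂, (b j : ℝ) ≤ c' * Real.logb 2 n) →
      (∀ j < k₂, b (j + 1) + ⌈c * Real.logb 2 (Real.logb 2 n)⌉₊ ≤ b j) →
      ((k₁ + 1 + (k₂ + 1) : ℕ) : ℝ)
        ≤ K * (1 / εq + 1 / εh) * (Real.logb 2 n / Real.logb 2 (Real.logb 2 n)) := by
  refine ⟨c' + c' * εq / c + 2 * εq, by positivity, ?_⟩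
  filter_upwards [Filter.eventually_ge_atTop 65536] with n hn k₁ k₂ a b ha1 ha2 hb1 hb2
  set L := Real.logb 2 n with hLdef
  set LL := Real.logb 2 L with hLLdef
  -- L ≥ 16
  have hL16 : (16 : ℝ) ≤ L := by
    have h1 : Real.logb 2 ((2 : ℝ) ^ (16 : ℕ)) = 16 := by
      rw [Real.logb_pow, Real.logb_self_eq_one (by norm_num)]
      norm_num
    have h2 : ((2 : ℝ) ^ (16 : ℕ)) ≤ (n : ℝ) := by
      have : (65536 : ℝ) ≤ (n : ℝ) := by exact_mod_cast hn
      norm_num at this ⊢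
      linarith
    calc (16 : ℝ) = Real.logb 2 ((2 : ℝ) ^ (16 : ℕ)) := h1.symm
      _ ≤ L := Real.logb_le_logb_of_le (by norm_num) (by positivity) h2
  have hL0 : (0 : ℝ) < L := by linarith
  -- LL ≥ 4
  have hLL4 : (4 : ℝ) ≤ LL := by
    have h1 : Real.logb 2 ((2 : ℝ) ^ (4 : ℕ)) = 4 := by
      rw [Real.logb_pow, Real.logb_self_eq_one (by norm_num)]
      norm_num
    calc (4 : ℝ) = Real.logb 2 ((2 : ℝ) ^ (4 : ℕ)) := h1.symm
      _ ≤ LL := Real.logb_le_logb_of_le (by norm_num) (by norm_num) (by norm_num at h1 ⊢; linarith)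
  have hLL0 : (0 : ℝ) < LL := by linarith
  -- LL ≤ L
  have hs : Real.sqrt L * Real.sqrt L = L := Real.mul_self_sqrt hL0.le
  have hs4 : (4 : ℝ) ≤ Real.sqrt L := by
    nlinarith [Real.sqrt_nonneg L]
  have hLLL : LL ≤ L := by
    have hlog : Real.log L ≤ 2 * Real.sqrt L := by
      have h1 : Real.log (Real.sqrt L) ≤ Real.sqrt L := Real.log_le_self (Real.sqrt_nonneg L)
      have h2 : Real.log (Real.sqrt L) = Real.log L / 2 := Real.log_sqrt hL0.le
      linarith
    have hl2 : (0.6931471803 : ℝ) < Real.log 2 := Real.log_two_gt_d9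
    have : LL = Real.log L / Real.log 2 := by rw [hLLdef, Real.logb]
    rw [this]
    rw [div_le_iff₀ (by linarith)]
    nlinarith [Real.sqrt_nonneg L]
  have hR1 : (1 : ℝ) ≤ L / LL := (one_le_div hLL0).mpr hLLL
  -- gap counting for a
  have hk1 : (k₁ : ℝ) ≤ c' / εq * (L / LL) := by
    have hgap := gap_count_aux a ⌈εq * LL⌉₊ k₁ ha2 k₁ le_rfl
    have h0 : (a k₁ : ℝ) + (k₁ : ℝ) * (⌈εq * LL⌉₊ : ℝ) ≤ (a 0 : ℝ) := by exact_mod_cast hgap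
    have hceil : εq * LL ≤ (⌈εq * LL⌉₊ : ℝ) := Nat.le_ceil _
    have h1 : (k₁ : ℝ) * (εq * LL) ≤ c' * L := by
      have := ha1 0 (Nat.zero_le _)
      nlinarith [(by positivity : (0:ℝ) ≤ (a k₁ : ℝ)), (by positivity : (0:ℝ) ≤ (k₁ : ℝ))]
    have h2 : c' / εq * (L / LL) = c' * L / (εq * LL) := by
      field_simp
    rw [h2, le_div_iff₀ (by positivity)]
    linarith
  -- gap counting for b
  have hk2 : (k₂ : ℝ) ≤ c' / c * (L / LL) := by
    have hgap := gap_count_aux b ⌈c * LL⌉₊ k₂ hb2 k₂ le_rfl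
    have h0 : (b k₂ : ℝ) + (k₂ : ℝ) * (⌈c * LL⌉₊ : ℝ) ≤ (b 0 : ℝ) := by exact_mod_cast hgap
    have hceil : c * LL ≤ (⌈c * LL⌉₊ : ℝ) := Nat.le_ceil _
    have h1 : (k₂ : ℝ) * (c * LL) ≤ c' * L := by
      have := hb1 0 (Nat.zero_le _)
      nlinarith [(by positivity : (0:ℝ) ≤ (b k₂ : ℝ)), (by positivity : (0:ℝ) ≤ (k₂ : ℝ))]
    have h2 : c' / c * (L / LL) = c' * L / (c * LL) := by
      field_simp
    rw [h2, le_div_iff₀ (by positivity)]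
    linarith
  -- combine
  set K := c' + c' * εq / c + 2 * εq with hK
  set R := L / LL with hRdef
  have hR0 : (0 : ℝ) < R := by linarith
  have hkey : (c' / εq + c' / c + 2) * R ≤ K * (1 / εq + 1 / εh) * R := by
    apply mul_le_mul_of_nonneg_right _ hR0.le
    have h1 : K * (1 / εq) = c' / εq + c' / c + 2 := by
      rw [hK]; field_simp
    have h2 : K * (1 / εq) ≤ K * (1 / εq + 1 / εh) := by
      have hK0 : (0 : ℝ) < K := by positivity
      have h3 : 1 / εq ≤ 1 / εq + 1 / εh := by
        have : (0:ℝ) < 1 / εh := by positivity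
        linarith
      exact mul_le_mul_of_nonneg_left h3 hK0.le
    linarith
  push_cast
  nlinarith [mul_le_mul_of_nonneg_left hR1 (show (0:ℝ) ≤ 2 by norm_num)]
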